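/- Let (R_n) be a simple set of polynomials with dual basis (e_n), and let m ≥ 1. Let (e_n^{[m]}) be the dual basis of the normalized derivatives R_n^{[m]}(x) = (1/(n+1)_m) R_{n+m}^{(m)}(x). Then D^m(e_j^{[m]}) = (-1)^m (j+1)_m e_{j+m} for every j ≥ 0. -/

import Mathlib

open Polynomial Finset

/-- Distributional derivative of a moment functional: ⟨Dw, p⟩ = -⟨w, p'⟩. -/
noncomputable def fD (w : ℂ[X] →ₗ[ℂ] ℂ) : ℂ[X] →ₗ[ℂ] ℂ :=
  -(w ∘ₗ (derivative : ℂ[X] →ₗ[ℂ] ℂ[X]))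

/-- The monic-normalized m-th derivative `R_n^{[m]} = (1/(n+1)_m) R_{n+m}^{(m)}`. -/
noncomputable def normDeriv (R : ℕ → ℂ[X]) (m n : ℕ) : ℂ[X] :=
  (∏ i ∈ Finset.range m, ((n : ℂ) + 1 + i))⁻¹ • derivative^[m] (R (n + m))

lemma fD_iterate_apply (m : ℕ) (w : ℂ[X] →ₗ[ℂ] ℂ) (p : ℂ[X]) :
    fD^[m] w p = (-1 : ℂ) ^ m * w (derivative^[m] p) := by
  induction m generalizing w p with
  | zero => simp
  | succ n ih =>
    rw [Function.iterate_succ_apply, Function.iterate_succ_apply', ih]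
    simp only [fD, LinearMap.neg_apply, LinearMap.comp_apply, pow_succ]
    ring

lemma span_R (R : ℕ → ℂ[X]) (hmonic : ∀ n, (R n).Monic)
    (hdeg : ∀ n, (R n).natDegree = n) :
    Submodule.span ℂ (Set.range R) = ⊤ := by
  rw [Submodule.eq_top_iff']
  intro p
  by_cases hp0 : p = 0
  · simp [hp0]
  · generalize hd : p.natDegree = d
    induction d using Nat.strong_induction_on generalizing p with
    | _ d ih =>
      have hmem : R d ∈ Submodule.span ℂ (Set.range R) :=
        Submodule.subset_span ⟨d, rfl⟩
      have ha0 : p.leadingCoeff ≠ 0 := Polynomial.leadingCoeff_ne_zero.mpr hp0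
      have key : p.leadingCoeff • R d = C p.leadingCoeff * R d :=
        Polynomial.smul_eq_C_mul _
      by_cases hz : p - p.leadingCoeff • R d = 0
      · rw [sub_eq_zero] at hz
        rw [hz]
        exact Submodule.smul_mem _ _ hmem
      · have hdeg_eq : p.degree = (p.leadingCoeff • R d).degree := by
          rw [key, Polynomial.degree_C_mul ha0,
            Polynomial.degree_eq_natDegree hp0,
            Polynomial.degree_eq_natDegree (hmonic d).ne_zero, hdeg, hd]
        have hlc : p.leadingCoeff = (p.leadingCoeff • R d).leadingCoeff := by
          rw [key, Polynomial.leadingCoeff_mul, Polynomial.leadingCoeff_C,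
            (hmonic d).leadingCoeff, mul_one]
        have hlt := Polynomial.degree_sub_lt hdeg_eq hp0 hlc
        have hlt' : (p - p.leadingCoeff • R d).natDegree < d := by
          have h2 := Polynomial.natDegree_lt_natDegree hz hlt
          omega
        have hrec := ih _ hlt' _ hz rfl
        have hrepr : p = (p - p.leadingCoeff • R d) + p.leadingCoeff • R d := by
          ring
        rw [hrepr]
        exact Submodule.add_mem _ hrec (Submodule.smul_mem _ _ hmem)

/-- `D^m(e_j^{[m]}) = (-1)^m (j+1)_m e_{j+m}`. -/
theorem stmt5 (R : ℕ → ℂ[X]) (m : ℕ) (hm : 1 ≤ m)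
    (hmonic : ∀ n, (R n).Monic) (hdeg : ∀ n, (R n).natDegree = n)
    (e eM : ℕ → (ℂ[X] →ₗ[ℂ] ℂ))
    (he : ∀ i j, e i (R j) = if i = j then 1 else 0)
    (heM : ∀ i j, eM i (normDeriv R m j) = if i = j then 1 else 0) :
    ∀ j, fD^[m] (eM j) =
      ((-1 : ℂ) ^ m * ∏ i ∈ Finset.range m, ((j : ℂ) + 1 + i)) • e (j + m) := by
  intro j
  apply LinearMap.ext_on_range (span_R R hmonic hdeg)
  intro n
  rw [fD_iterate_apply]
  simp only [LinearMap.smul_apply, smul_eq_mul, he]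
  rcases lt_or_ge n m with hn | hn
  · have h0 : derivative^[m] (R n) = 0 :=
      Polynomial.iterate_derivative_eq_zero (by rw [hdeg]; exact hn)
    rw [h0, map_zero]
    have hne : j + m ≠ n := by omega
    simp [hne]
  · obtain ⟨k, rfl⟩ : ∃ k, n = k + m := ⟨n - m, by omega⟩
    have hprod : (∏ i ∈ Finset.range m, ((k : ℂ) + 1 + i)) ≠ 0 := by
      apply Finset.prod_ne_zero_iff.mpr
      intro i _
      have h : ((k + 1 + i : ℕ) : ℂ) ≠ 0 := Nat.cast_ne_zero.mpr (by omega)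
      push_cast at h
      exact h
    have hder : derivative^[m] (R (k + m)) =
        (∏ i ∈ Finset.range m, ((k : ℂ) + 1 + i)) • normDeriv R m k := by
      rw [normDeriv, smul_inv_smul₀ hprod]
    rw [hder, map_smul, heM, smul_eq_mul]
    by_cases hjk : j = k
    · subst hjk
      simp [mul_comm]
    · have h1 : j + m ≠ k + m := by omega
      simp [hjk, h1]
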